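/- arXiv:1802.03444 — 4 statements merged into one kernel-verified Lean document; each statement's English description precedes it below -/
import Mathlib

section
/- Let M and N be symmetric v×v matrices lying in the Bose-Mesner algebra of a symmetric association scheme (i.e., in the common span of the 01-matrices A_0 = I, A_1, ..., A_d which are symmetric, pairwise Schur-orthogonal, sum to J, and whose span is closed under matrix multiplication). If M and N are positive semidefinite and M ∘ N = γI for some scalar γ, then (elsm(M)/tr(M)) · (elsm(N)/tr(N)) ≤ v. -/
open Matrix in
lemma cc_sum_entries_le {V : Type*} [Fintype V] [DecidableEq V]
    {P : Matrix V V ℝ} (hP : P.PosSemidef) :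
    ∑ i, ∑ j, P i j ≤ (Fintype.card V : ℝ) * P.trace := by
  have hsym : ∀ i j, P j i = P i j := fun i j => by
    have := congrFun (congrFun hP.1 j) i
    simpa [Matrix.conjTranspose_apply] using this.symm
  have key : ∀ i j : V, 2 * P i j ≤ P i i + P j j := by
    intro i j
    have h0 := hP.dotProduct_mulVec_nonneg (Pi.single i 1 - Pi.single j 1)
    rw [star_trivial, Matrix.mulVec_sub, Matrix.mulVec_single, Matrix.mulVec_single,
      sub_dotProduct, dotProduct_sub, dotProduct_sub] at h0
    simp only [single_dotProduct, one_mul, mul_one, MulOpposite.op_one, one_smul, Matrix.col_apply] at h0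
    have := hsym i j
    linarith
  have h2 : ∑ i, ∑ j, (2:ℝ) * P i j ≤ ∑ i : V, ∑ j : V, (P i i + P j j) :=
    Finset.sum_le_sum fun i _ => Finset.sum_le_sum fun j _ => key i j
  have h3 : ∑ i : V, ∑ j : V, (P i i + P j j)
      = (Fintype.card V : ℝ) * P.trace + (Fintype.card V : ℝ) * P.trace := by
    simp [Finset.sum_add_distrib, Finset.sum_const, nsmul_eq_mul, Matrix.trace, Matrix.diag,
      Finset.mul_sum, Finset.sum_comm]
  have h4 : ∑ i, ∑ j, (2:ℝ) * P i j = 2 * ∑ i, ∑ j, P i j := by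
    simp [Finset.mul_sum]
  linarith [h3 ▸ h2, h4 ▸ h2]

open Matrix in
lemma cc_sqrt_eigen {V : Type*} [Fintype V] [DecidableEq V]
    {R : Matrix V V ℝ} (hR : R.PosSemidef) (x : V → ℝ) (ρ : ℝ) (hρ : 0 ≤ ρ)
    (hx : (R * R) *ᵥ x = ρ • x) : R *ᵥ x = Real.sqrt ρ • x := by
  have hRt : Rᵀ = R := by
    ext i j
    simpa [Matrix.conjTranspose_apply] using congrFun (congrFun hR.1 i) j
  rcases eq_or_lt_of_le hρ with h0 | hpos
  · have hz : (R *ᵥ x) ⬝ᵥ (R *ᵥ x) = 0 := by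
      have hcalc : (R *ᵥ x) ⬝ᵥ (R *ᵥ x) = x ⬝ᵥ ((R * R) *ᵥ x) := by
        calc (R *ᵥ x) ⬝ᵥ (R *ᵥ x) = (x ᵥ* R) ⬝ᵥ (R *ᵥ x) := by
              rw [← Matrix.vecMul_transpose, hRt]
          _ = x ⬝ᵥ (R *ᵥ (R *ᵥ x)) := (Matrix.dotProduct_mulVec _ _ _).symm
          _ = x ⬝ᵥ ((R * R) *ᵥ x) := by rw [Matrix.mulVec_mulVec]
      rw [hcalc, hx, ← h0]
      simp
    have hzero := dotProduct_self_eq_zero.mp hz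
    rw [hzero, ← h0]
    simp
  · set s := Real.sqrt ρ with hs
    have hspos : 0 < s := Real.sqrt_pos.mpr hpos
    have hss : s * s = ρ := Real.mul_self_sqrt hρ
    set w : V → ℝ := R *ᵥ x - s • x with hw
    have hRw : R *ᵥ w = (-s) • w := by
      rw [hw, Matrix.mulVec_sub, Matrix.mulVec_smul, Matrix.mulVec_mulVec, hx]
      funext i
      simp only [Pi.sub_apply, Pi.smul_apply, smul_eq_mul]
      linear_combination (-(x i)) * hss
    have hnn := hR.dotProduct_mulVec_nonneg w
    rw [star_trivial, hRw] at hnn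
    have hdot : w ⬝ᵥ ((-s) • w) = (-s) * (w ⬝ᵥ w) := by
      rw [dotProduct_smul]; simp
    rw [hdot] at hnn
    have hww : 0 ≤ w ⬝ᵥ w := Finset.sum_nonneg fun i _ => mul_self_nonneg _
    have hwz : w ⬝ᵥ w = 0 := by nlinarith
    have hw0 : w = 0 := dotProduct_self_eq_zero.mp hwz
    rw [hw, sub_eq_zero] at hw0
    exact hw0

open Matrix in
/-- The clique-coclique bound for symmetric association schemes. -/
theorem clique_coclique_bound {V : Type*} [Fintype V] [DecidableEq V] (d : ℕ)
    (A : Fin (d + 1) → Matrix V V ℝ)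
    (hA0 : A 0 = 1)
    (h01 : ∀ r i j, A r i j = 0 ∨ A r i j = 1)
    (hsymm : ∀ r, (A r).IsSymm)
    (horth : ∀ r s, r ≠ s → ∀ i j, A r i j * A s i j = 0)
    (hsum : ∑ r, A r = Matrix.of (fun _ _ => (1 : ℝ)))
    (hclosed : ∀ r s, ∃ c : Fin (d + 1) → ℝ, A r * A s = ∑ u, c u • A u)
    (M N : Matrix V V ℝ)
    (hM : ∃ c : Fin (d + 1) → ℝ, M = ∑ r, c r • A r)
    (hN : ∃ c : Fin (d + 1) → ℝ, N = ∑ r, c r • A r)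
    (hMpsd : M.PosSemidef) (hNpsd : N.PosSemidef)
    (γ : ℝ) (hSchur : ∀ i j, M i j * N i j = γ * (1 : Matrix V V ℝ) i j)
    (htrM : 0 < M.trace) (htrN : 0 < N.trace) :
    ((∑ i, ∑ j, M i j) / M.trace) * ((∑ i, ∑ j, N i j) / N.trace) ≤ Fintype.card V := by
  classical
  obtain ⟨a, hMa⟩ := hM
  obtain ⟨b, hNb⟩ := hN
  have hne : Nonempty V := by
    by_contra h
    rw [not_nonempty_iff] at h
    have : M.trace = 0 := by simp [Matrix.trace]
    rw [this] at htrM; exact lt_irrefl 0 htrM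
  obtain ⟨i0⟩ := hne
  set v : ℝ := (Fintype.card V : ℝ) with hv
  have hvpos : (0:ℝ) < v := by
    rw [hv]; exact_mod_cast Fintype.card_pos_iff.mpr ⟨i0⟩
  -- vanishing diagonals of nontrivial classes
  have hdiag0 : ∀ r : Fin (d+1), r ≠ 0 → ∀ i, A r i i = 0 := by
    intro r hr i
    have h := horth r 0 hr i i
    rw [hA0] at h
    simpa [Matrix.one_apply_eq] using h
  -- constant diagonals
  have hMdiag : ∀ i, M i i = a 0 := by
    intro i
    rw [hMa]
    simp only [Matrix.sum_apply, Matrix.smul_apply, smul_eq_mul]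
    rw [Finset.sum_eq_single 0]
    · rw [hA0]; simp [Matrix.one_apply_eq]
    · intro r _ hr; rw [hdiag0 r hr i]; ring
    · simp
  have hNdiag : ∀ i, N i i = b 0 := by
    intro i
    rw [hNb]
    simp only [Matrix.sum_apply, Matrix.smul_apply, smul_eq_mul]
    rw [Finset.sum_eq_single 0]
    · rw [hA0]; simp [Matrix.one_apply_eq]
    · intro r _ hr; rw [hdiag0 r hr i]; ring
    · simp
  have htrMv : M.trace = v * a 0 := by
    simp [Matrix.trace, Matrix.diag, hMdiag, Finset.sum_const, nsmul_eq_mul, hv]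
  have htrNv : N.trace = v * b 0 := by
    simp [Matrix.trace, Matrix.diag, hNdiag, Finset.sum_const, nsmul_eq_mul, hv]
  -- products of classes are symmetric
  have hprodsymm : ∀ (r s : Fin (d+1)), Matrix.transpose (A r * A s) = A r * A s := by
    intro r s
    obtain ⟨c, hc⟩ := hclosed r s
    rw [hc, Matrix.transpose_sum]
    exact Finset.sum_congr rfl fun u _ => by rw [Matrix.transpose_smul, (hsymm u).eq]
  -- constant row sums
  have hrow : ∀ (Q : Matrix V V ℝ) (q : Fin (d+1) → ℝ), Q = ∑ r, q r • A r →
      ∀ i j, ∑ k, Q i k = ∑ k, Q j k := by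
    intro Q q hQ i j
    have e1 : Q * Matrix.of (fun _ _ => (1:ℝ)) = ∑ s, ∑ r, q r • (A r * A s) := by
      rw [← hsum, hQ, Matrix.mul_sum]
      refine Finset.sum_congr rfl fun s _ => ?_
      rw [Finset.sum_mul]
      exact Finset.sum_congr rfl fun r _ => smul_mul_assoc _ _ _
    have hQJ : Matrix.transpose (Q * Matrix.of (fun _ _ => (1:ℝ))) = Q * Matrix.of (fun _ _ => (1:ℝ)) := by
      rw [e1, Matrix.transpose_sum]
      refine Finset.sum_congr rfl fun s _ => ?_
      rw [Matrix.transpose_sum]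
      exact Finset.sum_congr rfl fun r _ => by rw [Matrix.transpose_smul, hprodsymm r s]
    have h2 := congrFun (congrFun hQJ j) i
    simpa [Matrix.transpose_apply, Matrix.mul_apply] using h2
  set ρM : ℝ := ∑ k, M i0 k with hρMdef
  set ρN : ℝ := ∑ k, N i0 k with hρNdef
  have hMrow : ∀ i, ∑ k, M i k = ρM := fun i => hrow M a hMa i i0
  have hNrow : ∀ i, ∑ k, N i k = ρN := fun i => hrow N b hNb i i0
  have hMvec : M *ᵥ (fun _ => (1:ℝ)) = ρM • (fun _ => (1:ℝ)) := by
    funext i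
    simp [Matrix.mulVec, dotProduct, hMrow i]
  have hNvec : N *ᵥ (fun _ => (1:ℝ)) = ρN • (fun _ => (1:ℝ)) := by
    funext i
    simp [Matrix.mulVec, dotProduct, hNrow i]
  have helsmM : ∑ i, ∑ j, M i j = v * ρM := by
    simp [hMrow, Finset.sum_const, nsmul_eq_mul, hv]
  have helsmN : ∑ i, ∑ j, N i j = v * ρN := by
    simp [hNrow, Finset.sum_const, nsmul_eq_mul, hv]
  have hρM : 0 ≤ ρM := by
    have h := hMpsd.dotProduct_mulVec_nonneg (fun _ => (1:ℝ))
    rw [star_trivial, hMvec] at h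
    have : ((fun _ => (1:ℝ)) : V → ℝ) ⬝ᵥ (ρM • fun _ => (1:ℝ)) = v * ρM := by
      simp [dotProduct, Finset.sum_const, nsmul_eq_mul, hv]
    rw [this] at h
    exact nonneg_of_mul_nonneg_right h hvpos
  -- square root of M
  open scoped MatrixOrder in set R := CFC.sqrt M with hRdef
  open scoped MatrixOrder in have hRpsd : R.PosSemidef := (CFC.sqrt_nonneg M).posSemidef
  open scoped MatrixOrder in have hRR : R * R = M := CFC.sqrt_mul_sqrt_self M hMpsd.nonneg
  have hRvec : R *ᵥ (fun _ => (1:ℝ)) = Real.sqrt ρM • (fun _ => (1:ℝ)) :=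
    cc_sqrt_eigen hRpsd _ ρM hρM (by rw [hRR]; exact hMvec)
  set P := R * N * R with hPdef
  have hPpsd : P.PosSemidef := by
    have h := hNpsd.conjTranspose_mul_mul_same R
    rwa [hRpsd.1] at h
  have htrP : P.trace = (M * N).trace := by
    rw [hPdef, Matrix.trace_mul_comm (R * N) R, ← Matrix.mul_assoc, hRR]
  have hNsym : ∀ i j, N j i = N i j := fun i j => by
    have := congrFun (congrFun hNpsd.1 j) i
    simpa [Matrix.conjTranspose_apply] using this.symm
  have htrMN : (M * N).trace = γ * v := by
    have hrow1 : ∀ i : V, ∑ k, γ * (1 : Matrix V V ℝ) i k = γ := by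
      intro i
      simp [Matrix.one_apply, Finset.sum_ite_eq]
    calc (M * N).trace = ∑ i, ∑ k, M i k * N k i := by
          simp [Matrix.trace, Matrix.diag, Matrix.mul_apply]
      _ = ∑ i, ∑ k, γ * (1 : Matrix V V ℝ) i k := by
          refine Finset.sum_congr rfl fun i _ => Finset.sum_congr rfl fun k _ => ?_
          rw [hNsym i k]
          exact hSchur i k
      _ = γ * v := by
          simp [hrow1, Finset.sum_const, nsmul_eq_mul, hv, mul_comm]
  have hPvec : P *ᵥ (fun _ => (1:ℝ)) = (ρM * ρN) • (fun _ => (1:ℝ)) := by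
    rw [hPdef, ← Matrix.mulVec_mulVec, ← Matrix.mulVec_mulVec, hRvec, Matrix.mulVec_smul,
      hNvec, Matrix.mulVec_smul, Matrix.mulVec_smul, hRvec]
    funext i
    simp only [Pi.smul_apply, smul_eq_mul, mul_one]
    linear_combination ρN * Real.mul_self_sqrt hρM
  have hsumP : ∑ i, ∑ j, P i j = v * (ρM * ρN) := by
    have hr : ∀ i, ∑ j, P i j = ρM * ρN := by
      intro i
      have h := congrFun hPvec i
      simpa [Matrix.mulVec, dotProduct] using h
    simp [hr, Finset.sum_const, nsmul_eq_mul, hv]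
  have hkey : ρM * ρN ≤ γ * v := by
    have h := cc_sum_entries_le hPpsd
    rw [hsumP, htrP, htrMN, ← hv] at h
    exact le_of_mul_le_mul_left h hvpos
  have hγ : M.trace * N.trace = γ * v * v := by
    have h1 := hSchur i0 i0
    rw [Matrix.one_apply_eq, mul_one, hMdiag i0, hNdiag i0] at h1
    rw [htrMv, htrNv]
    linear_combination (v * v) * h1
  rw [helsmM, helsmN, div_mul_div_comm, div_le_iff₀ (mul_pos htrM htrN), hγ]
  nlinarith [mul_le_mul_of_nonneg_left hkey (mul_pos hvpos hvpos).le]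
end

section
/- The orthogonal projection (with respect to the trace inner product ⟨A,B⟩ = tr(A^T B)) of a positive semidefinite real symmetric matrix onto a transpose-closed unital real matrix algebra is positive semidefinite. -/
open Matrix

private lemma aeval_diagonal_fin {n : ℕ} (v : Fin n → ℝ) (q : Polynomial ℝ) :
    Polynomial.aeval (diagonal v) q = diagonal (fun i => q.eval (v i)) := by
  induction q using Polynomial.induction_on' with
  | add p r hp hr =>
    simp [map_add, hp, hr, diagonal_add]
  | monomial k c =>
    simp only [Polynomial.aeval_monomial, Polynomial.eval_monomial,
      Matrix.algebraMap_eq_diagonal, diagonal_pow, diagonal_mul_diagonal]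
    congr 1

private lemma aeval_unitary_conj {n : ℕ} (U D : Matrix (Fin n) (Fin n) ℝ)
    (hU : star U * U = 1) (hU' : U * star U = 1) (q : Polynomial ℝ) :
    Polynomial.aeval (U * D * star U) q = U * Polynomial.aeval D q * star U := by
  have hpow : ∀ m : ℕ, (U * D * star U) ^ m = U * D ^ m * star U := by
    intro m
    induction m with
    | zero => simp [hU']
    | succ m ih =>
      rw [pow_succ, ih, pow_succ]
      calc U * D ^ m * star U * (U * D * star U)
          = U * D ^ m * (star U * U) * D * star U := by noncomm_ring
        _ = U * (D ^ m * D) * star U := by rw [hU]; noncomm_ring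
  induction q using Polynomial.induction_on' with
  | add p r hp hr => rw [map_add, map_add, hp, hr, mul_add, add_mul]
  | monomial k c =>
    rw [Polynomial.aeval_monomial, Polynomial.aeval_monomial, hpow]
    simp only [← Algebra.smul_def, Matrix.smul_mul, Matrix.mul_smul]

private lemma transpose_aeval {n : ℕ} (A : Matrix (Fin n) (Fin n) ℝ) (q : Polynomial ℝ) :
    (Polynomial.aeval A q)ᵀ = Polynomial.aeval Aᵀ q := by
  induction q using Polynomial.induction_on' with
  | add p r hp hr => rw [map_add, map_add, transpose_add, hp, hr]
  | monomial k c =>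
    simp only [Polynomial.aeval_monomial, ← Algebra.smul_def, transpose_smul, transpose_pow]

/-- Tomiyama: the orthogonal projection (w.r.t. the trace inner product) of a PSD matrix
onto a transpose-closed unital matrix algebra is PSD. -/
theorem projection_of_posSemidef_posSemidef {n : ℕ}
    (S : Submodule ℝ (Matrix (Fin n) (Fin n) ℝ))
    (hmul : ∀ A ∈ S, ∀ B ∈ S, A * B ∈ S)
    (hone : (1 : Matrix (Fin n) (Fin n) ℝ) ∈ S)
    (htrans : ∀ A ∈ S, Aᵀ ∈ S)
    (M : Matrix (Fin n) (Fin n) ℝ) (hM : M.PosSemidef)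
    (P : Matrix (Fin n) (Fin n) ℝ) (hP : P ∈ S)
    (hproj : ∀ A ∈ S, ((M - P)ᵀ * A).trace = 0) :
    P.PosSemidef := by
  have hMsym : Mᵀ = M := by
    rw [← conjTranspose_eq_transpose_of_trivial]; exact hM.1
  -- Step 1 : P is symmetric
  have hPsym : Pᵀ = P := by
    obtain ⟨D, hD⟩ : ∃ D, D = P - Pᵀ := ⟨_, rfl⟩
    have hDS : D ∈ S := hD ▸ S.sub_mem hP (htrans P hP)
    have hDTS : Dᵀ ∈ S := htrans D hDS
    have h1 : ((P - M)ᵀ * D).trace = 0 := by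
      rw [show P - M = -(M - P) from (neg_sub M P).symm, transpose_neg, neg_mul,
        trace_neg, hproj D hDS, neg_zero]
    have h2 : ((M - Pᵀ)ᵀ * D).trace = 0 := by
      have h3 : ((M - P)ᵀ * Dᵀ).trace = 0 := hproj Dᵀ hDTS
      rw [transpose_sub, transpose_transpose, hMsym]
      calc ((M - P) * D).trace = ((M - P) * D)ᵀ.trace := (trace_transpose _).symm
        _ = (Dᵀ * (M - P)ᵀ).trace := by rw [transpose_mul]
        _ = ((M - P)ᵀ * Dᵀ).trace := trace_mul_comm _ _
        _ = 0 := h3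
    have hfro : (Dᵀ * D).trace = 0 := by
      have hDeq : D = (P - M) + (M - Pᵀ) := by rw [hD]; abel
      calc (Dᵀ * D).trace = (((P - M) + (M - Pᵀ))ᵀ * D).trace := by rw [← hDeq]
        _ = ((P - M)ᵀ * D).trace + ((M - Pᵀ)ᵀ * D).trace := by
            rw [transpose_add, add_mul, trace_add]
        _ = 0 := by rw [h1, h2, add_zero]
    have hsum : ∑ j, ∑ i, (D i j) ^ 2 = 0 := by
      simpa [Matrix.trace, Matrix.mul_apply, Matrix.diag, sq] using hfro
    have hzero : D = 0 := by
      ext i j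
      have h4 : ∀ j ∈ Finset.univ, (0:ℝ) ≤ ∑ i, (D i j) ^ 2 :=
        fun j _ => Finset.sum_nonneg fun i _ => sq_nonneg _
      have h5 := (Finset.sum_eq_zero_iff_of_nonneg h4).mp hsum j (Finset.mem_univ j)
      have h6 := (Finset.sum_eq_zero_iff_of_nonneg
        (fun i _ => sq_nonneg (D i j))).mp h5 i (Finset.mem_univ i)
      simpa using pow_eq_zero_iff (n := 2) (by norm_num) |>.mp h6
    rw [hD] at hzero
    exact (sub_eq_zero.mp hzero).symm
  have hPH : P.IsHermitian := by
    rw [IsHermitian, conjTranspose_eq_transpose_of_trivial, hPsym]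
  -- algebra structure: polynomials of P stay in S
  let T : Subalgebra ℝ (Matrix (Fin n) (Fin n) ℝ) :=
    { carrier := S
      mul_mem' := fun ha hb => hmul _ ha _ hb
      one_mem' := hone
      add_mem' := fun ha hb => S.add_mem ha hb
      zero_mem' := S.zero_mem
      algebraMap_mem' := fun r => by
        have : (algebraMap ℝ (Matrix (Fin n) (Fin n) ℝ)) r = r • 1 :=
          Algebra.algebraMap_eq_smul_one r
        rw [this]
        exact S.smul_mem r hone }
  have haevalS : ∀ q : Polynomial ℝ, Polynomial.aeval P q ∈ S := fun q =>
    Algebra.adjoin_le (Set.singleton_subset_iff.mpr (show P ∈ T from hP))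
      (Polynomial.aeval_mem_adjoin_singleton ℝ P)
  -- spectral data
  set U : Matrix (Fin n) (Fin n) ℝ := (hPH.eigenvectorUnitary : Matrix (Fin n) (Fin n) ℝ)
    with hUdef
  set ev : Fin n → ℝ := hPH.eigenvalues with hev
  have hU1 : star U * U = 1 := mem_unitaryGroup_iff'.mp hPH.eigenvectorUnitary.2
  have hU2 : U * star U = 1 := mem_unitaryGroup_iff.mp hPH.eigenvectorUnitary.2
  have hspec : P = U * diagonal ev * star U := by
    have := hPH.spectral_theorem
    simpa using this
  have hkey : ∀ q : Polynomial ℝ,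
      Polynomial.aeval P q = U * diagonal (fun i => q.eval (ev i)) * star U := by
    intro q
    rw [hspec, aeval_unitary_conj U _ hU1 hU2, aeval_diagonal_fin]
  -- the interpolating polynomial: 1 on negative eigenvalues, 0 elsewhere
  set s : Finset ℝ := Finset.image ev Finset.univ with hs
  set q : Polynomial ℝ := Lagrange.interpolate s id (fun x => if x < 0 then 1 else 0)
    with hq
  have hqe : ∀ i, q.eval (ev i) = if ev i < 0 then 1 else 0 := by
    intro i
    have hinj : Set.InjOn id (↑s : Set ℝ) := Function.injective_id.injOn
    have hi : ev i ∈ s := Finset.mem_image_of_mem ev (Finset.mem_univ i)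
    rw [hq]
    exact Lagrange.eval_interpolate_at_node (fun x => if x < 0 then 1 else 0) hinj hi
  set Q : Matrix (Fin n) (Fin n) ℝ := Polynomial.aeval P q with hQ
  have hQS : Q ∈ S := haevalS q
  have hQsym : Qᵀ = Q := by rw [hQ, transpose_aeval, hPsym]
  have hQdiag : Q = U * diagonal (fun i => q.eval (ev i)) * star U := hkey q
  -- trace identity from the projection property
  have htr : (Mᵀ * (Q * Q)).trace = (Pᵀ * (Q * Q)).trace := by
    have := hproj (Q * Q) (hmul Q hQS Q hQS)
    rw [transpose_sub, sub_mul, trace_sub, sub_eq_zero] at this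
    exact this
  -- left side is nonnegative
  have hleft : 0 ≤ (Mᵀ * (Q * Q)).trace := by
    have hps : (Q * M * Qᴴ).PosSemidef := hM.mul_mul_conjTranspose_same Q
    have htrace_nonneg : 0 ≤ (Q * M * Qᴴ).trace := by
      rw [Matrix.trace]
      apply Finset.sum_nonneg
      intro i _
      exact hps.diag_nonneg
    have heq : Mᵀ * (Q * Q) = M * Q * Q := by rw [hMsym]; noncomm_ring
    rw [heq]
    calc (0:ℝ) ≤ (Q * M * Qᴴ).trace := htrace_nonneg
      _ = (Q * M * Q).trace := by
          rw [conjTranspose_eq_transpose_of_trivial, hQsym]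
      _ = (M * Q * Q).trace := (trace_mul_cycle M Q Q).symm
  -- right side equals sum of negative eigenvalues
  have hright : (Pᵀ * (Q * Q)).trace = ∑ i, ev i * (if ev i < 0 then 1 else 0) := by
    rw [hPsym, hspec, hQdiag]
    set d : Fin n → ℝ := fun i => q.eval (ev i) with hd
    have hmid : U * diagonal ev * star U * (U * diagonal d * star U *
        (U * diagonal d * star U)) = U * diagonal (ev * d * d) * star U := by
      calc U * diagonal ev * star U * (U * diagonal d * star U * (U * diagonal d * star U))
          = U * (diagonal ev * (star U * U) * diagonal d * (star U * U) * diagonal d) *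
            star U := by noncomm_ring
        _ = U * (diagonal ev * diagonal d * diagonal d) * star U := by
            rw [hU1]; noncomm_ring
        _ = U * diagonal (ev * d * d) * star U := by
            rw [diagonal_mul_diagonal, diagonal_mul_diagonal]
            rfl
    rw [hmid, trace_mul_cycle, hU1, one_mul, trace_diagonal]
    refine Finset.sum_congr rfl fun i _ => ?_
    have hdi : d i = if ev i < 0 then 1 else 0 := hqe i
    simp only [Pi.mul_apply, hdi]
    by_cases h : ev i < 0 <;> simp [h]
  -- conclude each eigenvalue is nonnegative
  have hsumnn : 0 ≤ ∑ i, ev i * (if ev i < 0 then 1 else 0) := by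
    rw [← hright, ← htr]; exact hleft
  have hterms : ∀ i ∈ Finset.univ, ev i * (if ev i < 0 then 1 else 0) ≤ 0 := by
    intro i _
    by_cases h : ev i < 0 <;> simp [h, le_of_lt]
  have hallzero := (Finset.sum_eq_zero_iff_of_nonpos hterms).mp
    (le_antisymm (Finset.sum_nonpos hterms) hsumnn)
  have hevnn : ∀ i, 0 ≤ ev i := by
    intro i
    by_contra hneg
    push_neg at hneg
    have := hallzero i (Finset.mem_univ i)
    rw [if_pos hneg, mul_one] at this
    exact absurd this (ne_of_lt hneg)
  -- P is PSD
  rw [hspec, Matrix.star_eq_conjTranspose]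
  exact (posSemidef_diagonal_iff.mpr hevnn).mul_mul_conjTranspose_same U
end

section
/- Let F be a t-intersecting family of k-subsets of an n-set, x its characteristic vector, N_F = x x^T, and Ψ the orthogonal projection onto the span of the Johnson scheme matrices A_0, ..., A_k (with respect to the trace inner product). Then Ψ(N_F) is positive semidefinite, lies in the span of A_0, ..., A_{k−t}, tr(Ψ(N_F)) = |F|, and elsm(Ψ(N_F)) = |F|². -/
open Matrix

namespace ProjTIF

noncomputable def ip {m : Type*} [Fintype m] (B C : Matrix m m ℝ) : ℝ :=
  ∑ a, ∑ b, B a b * C a b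

variable {m : Type*} [Fintype m]

lemma trace_transpose_mul (B C : Matrix m m ℝ) : (Bᵀ * C).trace = ip B C := by
  simp only [Matrix.trace, Matrix.diag_apply, Matrix.mul_apply, Matrix.transpose_apply]
  rw [Finset.sum_comm]
  rfl

lemma ip_add_left (B B' C : Matrix m m ℝ) : ip (B + B') C = ip B C + ip B' C := by
  simp [ip, add_mul, Finset.sum_add_distrib]

lemma ip_sub_left (B B' C : Matrix m m ℝ) : ip (B - B') C = ip B C - ip B' C := by
  simp [ip, sub_mul, Finset.sum_sub_distrib]

lemma ip_smul_left (r : ℝ) (B C : Matrix m m ℝ) : ip (r • B) C = r * ip B C := by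
  simp [ip, Finset.mul_sum, mul_assoc]

lemma ip_comm (B C : Matrix m m ℝ) : ip B C = ip C B := by
  simp [ip, mul_comm]

lemma ip_sum_left {ι : Type*} (u : Finset ι) (f : ι → Matrix m m ℝ) (C : Matrix m m ℝ) :
    ip (∑ s ∈ u, f s) C = ∑ s ∈ u, ip (f s) C := by
  classical
  induction u using Finset.induction with
  | empty => simp [ip]
  | insert _ _ h ih => rw [Finset.sum_insert h, Finset.sum_insert h, ip_add_left, ih]

lemma ip_self_eq_zero {B : Matrix m m ℝ} (h : ip B B = 0) : B = 0 := by
  ext a b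
  have h1 : ∀ a ∈ (Finset.univ : Finset m), 0 ≤ ∑ b, B a b * B a b :=
    fun a _ => Finset.sum_nonneg fun b _ => mul_self_nonneg _
  have h2 := (Finset.sum_eq_zero_iff_of_nonneg h1).mp h a (Finset.mem_univ a)
  have h3 := (Finset.sum_eq_zero_iff_of_nonneg
    (fun b _ => mul_self_nonneg (B a b))).mp h2 b (Finset.mem_univ b)
  have := mul_self_eq_zero.mp h3
  simpa using this

lemma ip_one_right [DecidableEq m] (B : Matrix m m ℝ) : ip B 1 = B.trace := by
  simp [ip, Matrix.one_apply, mul_ite, mul_one, mul_zero, Finset.sum_ite_eq',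
    Matrix.trace, Matrix.diag]

lemma quad_form_nonneg {ι : Type*} [Fintype ι] (c : ℝ) (hc : 0 ≤ c) (y : ι → m → ℝ) :
    Matrix.PosSemidef (c • ∑ i : ι, Matrix.vecMulVec (y i) (y i)) := by
  rw [Matrix.posSemidef_iff_dotProduct_mulVec]
  constructor
  · ext a b
    simp [Matrix.conjTranspose_apply, Matrix.smul_apply, Matrix.sum_apply,
      Matrix.vecMulVec_apply, mul_comm]
  · intro v
    rw [show star v = v from star_trivial v, Matrix.smul_mulVec,
      dotProduct_smul, smul_eq_mul]
    refine mul_nonneg hc ?_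
    have expand : v ⬝ᵥ (∑ i : ι, Matrix.vecMulVec (y i) (y i)) *ᵥ v
        = ∑ a, ∑ b, v a * (∑ i : ι, Matrix.vecMulVec (y i) (y i)) a b * v b := by
      simp [dotProduct, Matrix.mulVec, Finset.mul_sum, mul_assoc]
    rw [expand]
    have step1 : (∑ a, ∑ b, v a * (∑ i : ι, Matrix.vecMulVec (y i) (y i)) a b * v b)
        = ∑ i : ι, (∑ a, v a * y i a) * (∑ b, v b * y i b) := by
      calc (∑ a, ∑ b, v a * (∑ i : ι, Matrix.vecMulVec (y i) (y i)) a b * v b)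
          = ∑ a, ∑ b, ∑ i : ι, (v a * y i a) * (v b * y i b) := by
            refine Finset.sum_congr rfl fun a _ => Finset.sum_congr rfl fun b _ => ?_
            rw [Matrix.sum_apply, Finset.mul_sum, Finset.sum_mul]
            refine Finset.sum_congr rfl fun i _ => ?_
            rw [Matrix.vecMulVec_apply]
            ring
        _ = ∑ a, ∑ i : ι, ∑ b, (v a * y i a) * (v b * y i b) :=
            Finset.sum_congr rfl fun a _ => Finset.sum_comm
        _ = ∑ i : ι, ∑ a, ∑ b, (v a * y i a) * (v b * y i b) := Finset.sum_comm
        _ = ∑ i : ι, (∑ a, v a * y i a) * (∑ b, v b * y i b) := by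
            refine Finset.sum_congr rfl fun i _ => ?_
            rw [Finset.sum_mul_sum]
    rw [step1]
    exact Finset.sum_nonneg fun i _ => mul_self_nonneg _

variable {n k : ℕ}

lemma card_fiber (s t : Finset (Fin n)) (a b : Bool) :
    Fintype.card {z : Fin n // ((decide (z ∈ s), decide (z ∈ t)) : Bool × Bool) = (a, b)} =
    ((if a then s else sᶜ) ∩ (if b then t else tᶜ)).card := by
  rw [Fintype.card_subtype]
  congr 1
  ext z
  cases a <;> cases b <;>
    simp [Finset.mem_inter, Finset.mem_compl, Prod.ext_iff]

lemma exists_perm (α β α' β' : Finset (Fin n))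
    (hα : α.card = α'.card) (hβ : β.card = β'.card)
    (h : (α ∩ β).card = (α' ∩ β').card) :
    ∃ g : Equiv.Perm (Fin n), (∀ z, g z ∈ α' ↔ z ∈ α) ∧ (∀ z, g z ∈ β' ↔ z ∈ β) := by
  classical
  have hcard : ∀ i : Bool × Bool,
      Fintype.card {z : Fin n // ((decide (z ∈ α), decide (z ∈ β)) : Bool × Bool) = i} =
      Fintype.card {z : Fin n // ((decide (z ∈ α'), decide (z ∈ β')) : Bool × Bool) = i} := by
    rintro ⟨a, b⟩
    rw [card_fiber, card_fiber]
    have h1 := Finset.card_sdiff_add_card_inter α β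
    have h1' := Finset.card_sdiff_add_card_inter α' β'
    have h2 := Finset.card_sdiff_add_card_inter β α
    have h2' := Finset.card_sdiff_add_card_inter β' α'
    have h3 := Finset.card_union_add_card_inter α β
    have h3' := Finset.card_union_add_card_inter α' β'
    have h4 := Finset.card_compl (α ∪ β)
    have h4' := Finset.card_compl (α' ∪ β')
    rw [Finset.inter_comm β α] at h2
    rw [Finset.inter_comm β' α'] at h2'
    cases a <;> cases b
    · rw [if_neg (by decide), if_neg (by decide), if_neg (by decide), if_neg (by decide),
        show αᶜ ∩ βᶜ = (α ∪ β)ᶜ from by ext z; simp [not_or],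
        show α'ᶜ ∩ β'ᶜ = (α' ∪ β')ᶜ from by ext z; simp [not_or]]
      omega
    · rw [if_neg (by decide), if_pos (by decide), if_neg (by decide), if_pos (by decide),
        show αᶜ ∩ β = β \ α from by ext z; simp [and_comm],
        show α'ᶜ ∩ β' = β' \ α' from by ext z; simp [and_comm]]
      omega
    · rw [if_pos (by decide), if_neg (by decide), if_pos (by decide), if_neg (by decide),
        show α ∩ βᶜ = α \ β from by ext z; simp,
        show α' ∩ β'ᶜ = α' \ β' from by ext z; simp]
      omega
    · rw [if_pos (by decide), if_pos (by decide), if_pos (by decide), if_pos (by decide)]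
      exact h
  let e : ∀ i : Bool × Bool,
      {z : Fin n // ((decide (z ∈ α), decide (z ∈ β)) : Bool × Bool) = i} ≃
      {z : Fin n // ((decide (z ∈ α'), decide (z ∈ β')) : Bool × Bool) = i} :=
    fun i => Fintype.equivOfCardEq (hcard i)
  refine ⟨Equiv.ofFiberEquiv e, ?_, ?_⟩ <;> intro z <;>
    have h0 := Equiv.ofFiberEquiv_map e z
  · have := congrArg Prod.fst h0
    simpa using this
  · have := congrArg Prod.snd h0
    simpa using this

def tau (n k : ℕ) (g : Equiv.Perm (Fin n)) :
    {s : Finset (Fin n) // s.card = k} ≃ {s : Finset (Fin n) // s.card = k} :=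
  (Equiv.finsetCongr g).subtypeEquiv (fun s => by simp)

lemma mem_tau (g : Equiv.Perm (Fin n)) (α : {s : Finset (Fin n) // s.card = k}) (z : Fin n) :
    z ∈ (tau n k g α).1 ↔ g.symm z ∈ α.1 := by
  simp [tau, Equiv.subtypeEquiv, Finset.mem_map_equiv]

lemma mem_tau_symm (g : Equiv.Perm (Fin n)) (α : {s : Finset (Fin n) // s.card = k})
    (z : Fin n) : z ∈ ((tau n k g).symm α).1 ↔ g z ∈ α.1 := by
  simp [tau, Equiv.subtypeEquiv, Finset.mem_map_equiv]

lemma tau_eq (g : Equiv.Perm (Fin n)) (α α' : {s : Finset (Fin n) // s.card = k})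
    (hiff : ∀ z, g z ∈ α'.1 ↔ z ∈ α.1) : tau n k g α = α' := by
  refine Subtype.ext (Finset.ext fun z => ?_)
  rw [mem_tau, ← hiff (g.symm z), Equiv.apply_symm_apply]

lemma tau_symm_comp (g g' : Equiv.Perm (Fin n)) (α : {s : Finset (Fin n) // s.card = k}) :
    (tau n k g').symm (tau n k g α) = (tau n k (g⁻¹ * g')).symm α := by
  refine Subtype.ext (Finset.ext fun z => ?_)
  rw [mem_tau_symm, mem_tau, mem_tau_symm]
  rfl

lemma card_inter_tau (g : Equiv.Perm (Fin n)) (α β : {s : Finset (Fin n) // s.card = k}) :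
    ((tau n k g α).1 ∩ (tau n k g β).1).card = (α.1 ∩ β.1).card := by
  have h : (tau n k g α).1 ∩ (tau n k g β).1 = (α.1 ∩ β.1).map g.toEmbedding := by
    ext z
    simp [mem_tau, Finset.mem_map_equiv]
  rw [h, Finset.card_map]

end ProjTIF

open ProjTIF

set_option maxHeartbeats 1000000 in
theorem projection_of_t_intersecting_family (n k t : ℕ) (ht : t ≤ k)
    (F : Finset {s : Finset (Fin n) // s.card = k})
    (hint : ∀ α ∈ F, ∀ β ∈ F, t ≤ (α.1 ∩ β.1).card)
    (A : ℕ → Matrix {s : Finset (Fin n) // s.card = k} {s : Finset (Fin n) // s.card = k} ℝ)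
    (hA : ∀ r, A r = Matrix.of (fun α β => if (α.1 ∩ β.1).card = k - r then 1 else 0))
    (x : {s : Finset (Fin n) // s.card = k} → ℝ)
    (hx : x = fun α => if α ∈ F then 1 else 0)
    (P : Matrix {s : Finset (Fin n) // s.card = k} {s : Finset (Fin n) // s.card = k} ℝ)
    (c : ℕ → ℝ)
    (hspan : P = ∑ r ∈ Finset.range (k + 1), c r • A r)
    (hproj : ∀ r ∈ Finset.range (k + 1),
      ((Matrix.of (fun α β => x α * x β) - P)ᵀ * A r).trace = 0) :
    P.PosSemidef ∧
    (∃ c' : ℕ → ℝ, P = ∑ r ∈ Finset.range (k - t + 1), c' r • A r) ∧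
    P.trace = F.card ∧
    (∑ α, ∑ β, P α β) = (F.card : ℝ) ^ 2 := by
  classical
  set N : Matrix {s : Finset (Fin n) // s.card = k} {s : Finset (Fin n) // s.card = k} ℝ :=
    Matrix.of (fun α β => x α * x β) with hN
  have hm : ∀ α β : {s : Finset (Fin n) // s.card = k}, (α.1 ∩ β.1).card ≤ k := fun α β => by
    calc (α.1 ∩ β.1).card ≤ α.1.card := Finset.card_le_card Finset.inter_subset_left
    _ = k := α.2
  have key : ∀ r ∈ Finset.range (k + 1), ip P (A r) = ip N (A r) := by
    intro r hr
    have h0 := hproj r hr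
    rw [Matrix.transpose_sub, Matrix.sub_mul, Matrix.trace_sub, sub_eq_zero,
      ProjTIF.trace_transpose_mul, ProjTIF.trace_transpose_mul] at h0
    exact h0.symm
  -- orthogonality of the A r
  have hAA : ∀ r s : ℕ, r ≤ k → s ≤ k → r ≠ s → ip (A r) (A s) = 0 := by
    intro r s hrk hsk hrs
    refine Finset.sum_eq_zero fun a _ => Finset.sum_eq_zero fun b _ => ?_
    simp only [hA, Matrix.of_apply]
    split_ifs with h1 h2
    · omega
    · ring
    · ring
    · ring
  have hPA : ∀ r ∈ Finset.range (k + 1), ip P (A r) = c r * ip (A r) (A r) := by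
    intro r hr
    rw [hspan, ip_sum_left, Finset.sum_eq_single r]
    · rw [ip_smul_left]
    · intro s hs hsr
      rw [ip_smul_left,
        hAA s r (by simpa using Nat.lt_succ_iff.mp (Finset.mem_range.mp hs))
          (Nat.lt_succ_iff.mp (Finset.mem_range.mp hr)) hsr, mul_zero]
    · intro habs
      exact (habs hr).elim
  have hNA0 : ∀ r : ℕ, k - t < r → r ≤ k → ip N (A r) = 0 := by
    intro r h1 h2
    refine Finset.sum_eq_zero fun a _ => Finset.sum_eq_zero fun b _ => ?_
    simp only [hN, hA, Matrix.of_apply, hx]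
    by_cases ha : a ∈ F
    · by_cases hb : b ∈ F
      · have h3 := hint a ha b hb
        have h4 : (a.1 ∩ b.1).card ≠ k - r := by omega
        rw [if_neg h4]
        ring
      · rw [if_neg hb]
        ring
    · rw [if_neg ha]
      ring
  -- Part 2
  have hzero : ∀ r ∈ Finset.range (k + 1), r ∉ Finset.range (k - t + 1) → c r • A r = 0 := by
    intro r hr hr'
    have h1 : k - t < r := by
      simp only [Finset.mem_range, not_lt] at hr'
      omega
    have h2 : r ≤ k := Nat.lt_succ_iff.mp (Finset.mem_range.mp hr)
    have h3 : c r * ip (A r) (A r) = 0 := by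
      rw [← hPA r hr, key r hr, hNA0 r h1 h2]
    rcases mul_eq_zero.mp h3 with h | h
    · rw [h, zero_smul]
    · rw [ip_self_eq_zero h, smul_zero]
  have part2 : P = ∑ r ∈ Finset.range (k - t + 1), c r • A r := by
    rw [hspan]
    exact (Finset.sum_subset
      (by intro r hr; simp only [Finset.mem_range] at *; omega) hzero).symm
  -- A 0 is the identity
  have hA0 : A 0 = 1 := by
    ext a b
    rw [hA]
    by_cases hab : a = b
    · subst hab
      simp [Finset.inter_self, a.2]
    · have hne : (a.1 ∩ b.1).card ≠ k := by
        intro hcd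
        apply hab
        have e1 : a.1 ∩ b.1 = a.1 :=
          Finset.eq_of_subset_of_card_le Finset.inter_subset_left (by rw [a.2, hcd])
        have e2 : a.1 ∩ b.1 = b.1 :=
          Finset.eq_of_subset_of_card_le Finset.inter_subset_right (by rw [b.2, hcd])
        exact Subtype.ext (e1 ▸ e2)
      simp [hne, Matrix.one_apply, hab]
  -- Part 3
  have hsumx : ∑ a, x a = (F.card : ℝ) := by
    simp [hx, Finset.sum_ite_mem, Finset.univ_inter]
  have part3 : P.trace = F.card := by
    have h0 : (0 : ℕ) ∈ Finset.range (k + 1) := by simp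
    have h1 := key 0 h0
    rw [hA0, ip_one_right, ip_one_right] at h1
    rw [h1]
    simp [Matrix.trace, Matrix.diag, hN, hx, Finset.sum_ite_mem, Finset.univ_inter]
  -- sum of all A r is the all-ones matrix, entrywise
  have hsum1 : ∀ a b : {s : Finset (Fin n) // s.card = k},
      ∑ r ∈ Finset.range (k + 1), A r a b = 1 := by
    intro a b
    simp only [hA, Matrix.of_apply]
    rw [Finset.sum_eq_single (k - (a.1 ∩ b.1).card)]
    · rw [if_pos (by have := hm a b; omega)]
    · intro s hs hne
      simp only [Finset.mem_range] at hs
      rw [if_neg (by have := hm a b; omega)]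
    · intro habs
      exact absurd (Finset.mem_range.mpr (by have := hm a b; omega)) habs
  have collapse : ∀ B : Matrix {s : Finset (Fin n) // s.card = k}
      {s : Finset (Fin n) // s.card = k} ℝ,
      ∑ r ∈ Finset.range (k + 1), ip B (A r) = ∑ a, ∑ b, B a b := by
    intro B
    calc ∑ r ∈ Finset.range (k + 1), ip B (A r)
        = ∑ r ∈ Finset.range (k + 1), ∑ a, ∑ b, B a b * A r a b := rfl
      _ = ∑ a, ∑ r ∈ Finset.range (k + 1), ∑ b, B a b * A r a b := Finset.sum_comm
      _ = ∑ a, ∑ b, ∑ r ∈ Finset.range (k + 1), B a b * A r a b :=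
          Finset.sum_congr rfl fun a _ => Finset.sum_comm
      _ = ∑ a, ∑ b, B a b := by
          refine Finset.sum_congr rfl fun a _ => Finset.sum_congr rfl fun b _ => ?_
          rw [← Finset.mul_sum, hsum1, mul_one]
  have part4 : (∑ α, ∑ β, P α β) = (F.card : ℝ) ^ 2 := by
    rw [← collapse P, Finset.sum_congr rfl key, collapse N]
    have : ∑ a, ∑ b, N a b = (∑ a, x a) * (∑ b, x b) := by
      rw [Finset.sum_mul_sum]
      rfl
    rw [this, hsumx, sq]
  -- Part 1: positive semidefiniteness via symmetrization
  set y : Equiv.Perm (Fin n) → {s : Finset (Fin n) // s.card = k} → ℝ :=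
    fun g a => x ((tau n k g).symm a) with hy
  set M : Matrix {s : Finset (Fin n) // s.card = k} {s : Finset (Fin n) // s.card = k} ℝ :=
    ∑ g : Equiv.Perm (Fin n), Matrix.vecMulVec (y g) (y g) with hM
  have hAtau : ∀ (r : ℕ) (g : Equiv.Perm (Fin n)) (a b : {s : Finset (Fin n) // s.card = k}),
      A r ((tau n k g).symm a) ((tau n k g).symm b) = A r a b := by
    intro r g a b
    have hc := card_inter_tau g ((tau n k g).symm a) ((tau n k g).symm b)
    rw [Equiv.apply_symm_apply, Equiv.apply_symm_apply] at hc
    rw [hA]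
    simp only [Matrix.of_apply, hc]
  have hMg : ∀ (g : Equiv.Perm (Fin n)) (r : ℕ),
      ip (Matrix.vecMulVec (y g) (y g)) (A r) = ip N (A r) := by
    intro g r
    show (∑ a, ∑ b, Matrix.vecMulVec (y g) (y g) a b * A r a b) = ∑ a, ∑ b, N a b * A r a b
    have h1 : ∀ a b, Matrix.vecMulVec (y g) (y g) a b * A r a b
        = N ((tau n k g).symm a) ((tau n k g).symm b)
          * A r ((tau n k g).symm a) ((tau n k g).symm b) := by
      intro a b
      rw [hAtau, Matrix.vecMulVec_apply]
      rfl
    calc (∑ a, ∑ b, Matrix.vecMulVec (y g) (y g) a b * A r a b)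
        = ∑ a, ∑ b, N ((tau n k g).symm a) ((tau n k g).symm b)
            * A r ((tau n k g).symm a) ((tau n k g).symm b) :=
          Finset.sum_congr rfl fun a _ => Finset.sum_congr rfl fun b _ => h1 a b
      _ = ∑ a, ∑ b, N ((tau n k g).symm a) b * A r ((tau n k g).symm a) b :=
          Finset.sum_congr rfl fun a _ => Fintype.sum_equiv ((tau n k g).symm)
            (fun b => N ((tau n k g).symm a) ((tau n k g).symm b)
              * A r ((tau n k g).symm a) ((tau n k g).symm b))
            (fun b => N ((tau n k g).symm a) b * A r ((tau n k g).symm a) b)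
            (fun b => rfl)
      _ = ∑ a, ∑ b, N a b * A r a b := Fintype.sum_equiv ((tau n k g).symm)
            (fun a => ∑ b, N ((tau n k g).symm a) b * A r ((tau n k g).symm a) b)
            (fun a => ∑ b, N a b * A r a b)
            (fun a => rfl)
  have hm' : (n.factorial : ℝ) ≠ 0 := Nat.cast_ne_zero.mpr (Nat.factorial_ne_zero n)
  have hMN : ∀ r : ℕ, ip M (A r) = (n.factorial : ℝ) * ip N (A r) := by
    intro r
    rw [hM, ip_sum_left]
    rw [Finset.sum_congr rfl fun g _ => hMg g r, Finset.sum_const, Finset.card_univ,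
      Fintype.card_perm, Fintype.card_fin, nsmul_eq_mul]
  have hMclass : ∀ a b a' b' : {s : Finset (Fin n) // s.card = k},
      (a.1 ∩ b.1).card = (a'.1 ∩ b'.1).card → M a b = M a' b' := by
    intro a b a' b' hcard
    obtain ⟨g, hg1, hg2⟩ := exists_perm a.1 b.1 a'.1 b'.1
      (by rw [a.2, a'.2]) (by rw [b.2, b'.2]) hcard
    have ha' : tau n k g a = a' := tau_eq g a a' hg1
    have hb' : tau n k g b = b' := tau_eq g b b' hg2
    rw [← ha', ← hb', hM]
    simp only [Matrix.sum_apply, Matrix.vecMulVec_apply]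
    have h2 : ∀ g' : Equiv.Perm (Fin n),
        y (g * g') (tau n k g a) * y (g * g') (tau n k g b) = y g' a * y g' b := by
      intro g'
      rw [hy]
      simp only
      rw [tau_symm_comp, tau_symm_comp, inv_mul_cancel_left]
    calc (∑ g' : Equiv.Perm (Fin n), y g' a * y g' b)
        = ∑ g' : Equiv.Perm (Fin n), y (g * g') (tau n k g a) * y (g * g') (tau n k g b) :=
          (Finset.sum_congr rfl fun g' _ => (h2 g').symm)
      _ = ∑ g' : Equiv.Perm (Fin n), y g' (tau n k g a) * y g' (tau n k g b) :=
          Fintype.sum_equiv (Equiv.mulLeft g)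
            (fun g' => y (g * g') (tau n k g a) * y (g * g') (tau n k g b))
            (fun g' => y g' (tau n k g a) * y g' (tau n k g b))
            (fun g' => rfl)
  set P' : Matrix {s : Finset (Fin n) // s.card = k} {s : Finset (Fin n) // s.card = k} ℝ :=
    (n.factorial : ℝ)⁻¹ • M with hP'
  have hP'A : ∀ r : ℕ, ip P' (A r) = ip N (A r) := by
    intro r
    rw [hP', ip_smul_left, hMN, ← mul_assoc, inv_mul_cancel₀ hm', one_mul]
  have hspanM : ∃ d : ℕ → ℝ, P' = ∑ r ∈ Finset.range (k + 1), d r • A r := by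
    refine ⟨fun r => if h : ∃ p : ({s : Finset (Fin n) // s.card = k} ×
        {s : Finset (Fin n) // s.card = k}), (p.1.1 ∩ p.2.1).card = k - r then
        (n.factorial : ℝ)⁻¹ * M h.choose.1 h.choose.2 else 0, ?_⟩
    ext a b
    have hmab := hm a b
    rw [Matrix.sum_apply]
    simp only [Matrix.smul_apply, hA, Matrix.of_apply, smul_eq_mul]
    rw [Finset.sum_eq_single (k - (a.1 ∩ b.1).card)]
    · rw [if_pos (by omega), mul_one]
      have hex : ∃ p : ({s : Finset (Fin n) // s.card = k} ×
          {s : Finset (Fin n) // s.card = k}),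
          (p.1.1 ∩ p.2.1).card = k - (k - (a.1 ∩ b.1).card) :=
        ⟨(a, b), show (a.1 ∩ b.1).card = k - (k - (a.1 ∩ b.1).card) by omega⟩
      rw [dif_pos hex]
      have hspec := hex.choose_spec
      have : M hex.choose.1 hex.choose.2 = M a b :=
        hMclass _ _ a b (by omega)
      rw [this]
      rfl
    · intro s hs hne
      simp only [Finset.mem_range] at hs
      rw [if_neg (by omega), mul_zero]
    · intro habs
      exact absurd (Finset.mem_range.mpr (by omega)) habs
  obtain ⟨d, hspanM⟩ := hspanM
  have hPP' : P = P' := by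
    have hexp : P - P' = ∑ r ∈ Finset.range (k + 1), (c r - d r) • A r := by
      rw [hspan, hspanM, ← Finset.sum_sub_distrib]
      exact Finset.sum_congr rfl fun r _ => (sub_smul _ _ _).symm
    have hz : ip (P - P') (P - P') = 0 := by
      nth_rewrite 1 [hexp]
      rw [ip_sum_left]
      refine Finset.sum_eq_zero fun r hr => ?_
      rw [ip_smul_left, ip_comm, ip_sub_left, key r hr, hP'A r, sub_self, mul_zero]
    have := ip_self_eq_zero hz
    exact sub_eq_zero.mp this
  have part1 : P.PosSemidef := by
    rw [hPP', hP', hM]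
    exact quad_form_nonneg _ (by positivity) y
  exact ⟨part1, ⟨c, part2⟩, part3, part4⟩
end

section
/- Suppose a t-(n,k,1) design exists on an n-set. Then any t-intersecting family F of k-subsets of the n-set satisfies |F| ≤ C(n−t, k−t). -/
open Finset

lemma perm_count {n k : ℕ} (A B : Finset (Fin n)) (hA : A.card = k) (hB : B.card = k) :
    (Finset.univ.filter fun g : Equiv.Perm (Fin n) => A.image g = B).card
      = Nat.factorial k * Nat.factorial (n - k) := by
  rw [← Fintype.card_subtype]
  have key : ∀ (g : Equiv.Perm (Fin n)), A.image g = B → ∀ a : Fin n, a ∈ A ↔ g a ∈ B := by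
    intro g hg a
    rw [← hg, Finset.mem_image]
    constructor
    · exact fun h => ⟨a, h, rfl⟩
    · rintro ⟨x, hx, hxa⟩
      rwa [← g.injective hxa]
  let E : {g : Equiv.Perm (Fin n) // A.image g = B} ≃
      ({x // x ∈ A} ≃ {x // x ∈ B}) × ({x // x ∉ A} ≃ {x // x ∉ B}) :=
    { toFun := fun g => (g.1.subtypeEquiv (key g.1 g.2),
        g.1.subtypeEquiv (fun a => (key g.1 g.2 a).not)),
      invFun := fun p => ⟨p.1.subtypeCongr p.2, by
        apply Finset.eq_of_subset_of_card_le
        · intro b hb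
          rw [Finset.mem_image] at hb
          obtain ⟨a, ha, rfl⟩ := hb
          have : p.1.subtypeCongr p.2 a = (p.1 ⟨a, ha⟩ : Fin n) := by
            simp [Equiv.subtypeCongr, ha]
          rw [this]
          exact (p.1 ⟨a, ha⟩).2
        · rw [Finset.card_image_of_injective _ (Equiv.injective _), hA, hB]⟩,
      left_inv := fun g => by
        ext x
        by_cases hx : x ∈ A <;> simp [Equiv.subtypeCongr, hx]
      right_inv := fun p => by
        apply Prod.ext
        · ext a
          simp [Equiv.subtypeCongr, a.2]
        · ext a
          simp [Equiv.subtypeCongr, a.2] }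
  rw [Fintype.card_congr E, Fintype.card_prod]
  have c1 : Fintype.card {x // x ∈ A} = k := by rw [Fintype.card_coe, hA]
  have c1' : Fintype.card {x // x ∈ B} = k := by rw [Fintype.card_coe, hB]
  have c2 : Fintype.card {x // x ∉ A} = n - k := by
    rw [Fintype.card_subtype_compl, Fintype.card_fin, c1]
  have c2' : Fintype.card {x // x ∉ B} = n - k := by
    rw [Fintype.card_subtype_compl, Fintype.card_fin, c1']
  rw [Fintype.card_equiv (Fintype.equivOfCardEq (c1.trans c1'.symm)),
    Fintype.card_equiv (Fintype.equivOfCardEq (c2.trans c2'.symm)), c1, c2]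

theorem ekr_bound_of_design_exists (n k t : ℕ) (ht : t ≤ k) (hk : k ≤ n)
    (hdesign : ∃ D : Finset {s : Finset (Fin n) // s.card = k},
      ∀ T : Finset (Fin n), T.card = t → ∃! B, B ∈ D ∧ T ⊆ B.1)
    (F : Finset {s : Finset (Fin n) // s.card = k})
    (hint : ∀ α ∈ F, ∀ β ∈ F, t ≤ (α.1 ∩ β.1).card) :
    F.card ≤ Nat.choose (n - t) (k - t) := by
  obtain ⟨D, hD⟩ := hdesign
  -- clique property
  have hclique : ∀ B ∈ D, ∀ B' ∈ D, t ≤ (B.1 ∩ B'.1).card → B = B' := by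
    intro B hB B' hB' hcard
    obtain ⟨T, hT, hTcard⟩ := Finset.exists_subset_card_eq hcard
    obtain ⟨B₀, _, huniq⟩ := hD T hTcard
    rw [huniq B ⟨hB, hT.trans Finset.inter_subset_left⟩,
      huniq B' ⟨hB', hT.trans Finset.inter_subset_right⟩]
  set P := (Finset.univ : Finset (Fin n)).powersetCard t with hP
  have hPcard : P.card = Nat.choose n t := by
    rw [hP, Finset.card_powersetCard, Finset.card_univ, Fintype.card_fin]
  -- design count
  have hfib1 : ∀ T ∈ P, (D.filter fun B => T ⊆ B.1).card = 1 := by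
    intro T hT
    rw [Finset.mem_powersetCard_univ] at hT
    obtain ⟨B₀, hB₀, huniq⟩ := hD T hT
    rw [Finset.card_eq_one]
    refine ⟨B₀, ?_⟩
    ext B
    simp only [Finset.mem_filter, Finset.mem_singleton]
    constructor
    · exact fun h => huniq B h
    · rintro rfl; exact hB₀
  have hfib2 : ∀ B ∈ D, (P.filter fun T => T ⊆ B.1).card = Nat.choose k t := by
    intro B _
    have : P.filter (fun T => T ⊆ B.1) = B.1.powersetCard t := by
      ext T
      simp only [hP, Finset.mem_filter, Finset.mem_powersetCard, Finset.subset_univ,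
        true_and]
      tauto
    rw [this, Finset.card_powersetCard, B.2]
  have hDcount : D.card * Nat.choose k t = Nat.choose n t := by
    have e1 : ∑ T ∈ P, (D.filter fun B => T ⊆ B.1).card = P.card := by
      rw [Finset.sum_congr rfl hfib1]
      simp
    have e2 : ∑ B ∈ D, (P.filter fun T => T ⊆ B.1).card = D.card * Nat.choose k t := by
      rw [Finset.sum_congr rfl hfib2, Finset.sum_const, smul_eq_mul]
    have e3 : ∑ T ∈ P, (D.filter fun B => T ⊆ B.1).card
        = ∑ B ∈ D, (P.filter fun T => T ⊆ B.1).card := by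
      simp_rw [Finset.card_filter]
      exact Finset.sum_comm
    rw [← e2, ← e3, e1, hPcard]
  -- per-permutation bound
  have hgle : ∀ g : Equiv.Perm (Fin n),
      ((F ×ˢ D).filter fun p => p.1.1.image g = p.2.1).card ≤ 1 := by
    intro g
    rw [Finset.card_le_one]
    intro p hp q hq
    simp only [Finset.mem_filter, Finset.mem_product] at hp hq
    obtain ⟨⟨hpF, hpD⟩, hpg⟩ := hp
    obtain ⟨⟨hqF, hqD⟩, hqg⟩ := hq
    have hBeq : p.2 = q.2 := by
      apply hclique p.2 hpD q.2 hqD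
      have : (p.1.1 ∩ q.1.1).image g = p.2.1 ∩ q.2.1 := by
        rw [← hpg, ← hqg, Finset.image_inter _ _ g.injective]
      rw [← this, Finset.card_image_of_injective _ g.injective]
      exact hint p.1 hpF q.1 hqF
    have hAeq : p.1 = q.1 := by
      apply Subtype.ext
      apply Finset.image_injective g.injective
      rw [hpg, hqg, hBeq]
    exact Prod.ext hAeq hBeq
  -- main counting
  have main : F.card * D.card * (Nat.factorial k * Nat.factorial (n - k))
      ≤ Nat.factorial n := by
    calc F.card * D.card * (Nat.factorial k * Nat.factorial (n - k))
        = ∑ p ∈ F ×ˢ D,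
            (Finset.univ.filter fun g : Equiv.Perm (Fin n) => p.1.1.image g = p.2.1).card := by
          rw [Finset.sum_congr rfl (fun p _ => perm_count p.1.1 p.2.1 p.1.2 p.2.2),
            Finset.sum_const, smul_eq_mul, Finset.card_product]
      _ = ∑ g : Equiv.Perm (Fin n),
            ((F ×ˢ D).filter fun p => p.1.1.image g = p.2.1).card := by
          simp_rw [Finset.card_filter]
          exact Finset.sum_comm
      _ ≤ ∑ _g : Equiv.Perm (Fin n), 1 := Finset.sum_le_sum (fun g _ => hgle g)
      _ = Nat.factorial n := by
          simp [Finset.card_univ, Fintype.card_perm, Fintype.card_fin]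
  have hfacpos : 0 < Nat.factorial k * Nat.factorial (n - k) :=
    Nat.mul_pos (Nat.factorial_pos k) (Nat.factorial_pos (n - k))
  have h1 : F.card * D.card ≤ Nat.choose n k := by
    apply Nat.le_of_mul_le_mul_right _ hfacpos
    calc F.card * D.card * (Nat.factorial k * Nat.factorial (n - k))
        ≤ Nat.factorial n := main
      _ = Nat.choose n k * (Nat.factorial k * Nat.factorial (n - k)) := by
          rw [← Nat.choose_mul_factorial_mul_factorial hk, mul_assoc]
  have h2 : F.card * Nat.choose n t ≤ Nat.choose (n - t) (k - t) * Nat.choose n t := by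
    calc F.card * Nat.choose n t = F.card * (D.card * Nat.choose k t) := by rw [hDcount]
      _ = F.card * D.card * Nat.choose k t := by ring
      _ ≤ Nat.choose n k * Nat.choose k t := Nat.mul_le_mul_right _ h1
      _ = Nat.choose n t * Nat.choose (n - t) (k - t) := Nat.choose_mul ht
      _ = Nat.choose (n - t) (k - t) * Nat.choose n t := mul_comm _ _
  exact Nat.le_of_mul_le_mul_right h2 (Nat.choose_pos (ht.trans hk))
end
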